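/- Let n ≥ 1 and let X : ZMod n → Matrix (Fin I₁) (Fin I₂) ℝ be a third-order real tensor. Then there exist a tensor U : ZMod n → Matrix (Fin I₁) (Fin I₁) ℝ orthogonal under the t-product, a tensor V : ZMod n → Matrix (Fin I₂) (Fin I₂) ℝ orthogonal under the t-product, and an f-diagonal tensor S : ZMod n → Matrix (Fin I₁) (Fin I₂) ℝ such that X = U ∗ S ∗ Vᵀ (existence of the tensor SVD, t-SVD). -/

import Mathlib

open Matrix

variable {n : ℕ}

/-- The t-product of two third-order tensors, modeled as circular convolution
of frontal slices. -/
noncomputable def tMul [NeZero n] {a b c : ℕ}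
    (X : ZMod n → Matrix (Fin a) (Fin b) ℝ) (Y : ZMod n → Matrix (Fin b) (Fin c) ℝ) :
    ZMod n → Matrix (Fin a) (Fin c) ℝ :=
  fun k => ∑ j : ZMod n, X (k - j) * Y j

/-- The tensor transpose: transpose every frontal slice and reverse the order of
the frontal slices 2 through n. -/
def tTranspose {a b : ℕ} (X : ZMod n → Matrix (Fin a) (Fin b) ℝ) :
    ZMod n → Matrix (Fin b) (Fin a) ℝ :=
  fun k => (X (-k))ᵀ

/-- The identity tensor: the first frontal slice is the identity matrix and all
other frontal slices are zero. -/
def tId (n m : ℕ) : ZMod n → Matrix (Fin m) (Fin m) ℝ :=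
  fun k => if k = 0 then 1 else 0

/-- A tensor is orthogonal if `Qᵀ ∗ Q = Q ∗ Qᵀ = I` under the t-product. -/
def tOrthogonal [NeZero n] {m : ℕ} (Q : ZMod n → Matrix (Fin m) (Fin m) ℝ) : Prop :=
  tMul (tTranspose Q) Q = tId n m ∧ tMul Q (tTranspose Q) = tId n m


open scoped ComplexOrder

section SVD

variable {𝕜 : Type*} [RCLike 𝕜]



lemma col_inner_of_conjTranspose_mul_self {a b : ℕ} {M : Matrix (Fin a) (Fin b) 𝕜}
    {μ : Fin b → ℝ} (hM : Mᴴ * M = Matrix.diagonal (fun j => (μ j : 𝕜)))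
    (j j' : Fin b) :
    ∑ i, (starRingEnd 𝕜) (M i j) * M i j' = if j = j' then (μ j : 𝕜) else 0 := by
  have := congrFun (congrFun hM j) j'
  simpa [Matrix.mul_apply, Matrix.diagonal_apply, Matrix.conjTranspose_apply] using this

lemma col_eq_zero_of_diag_zero {a b : ℕ} {M : Matrix (Fin a) (Fin b) 𝕜}
    {μ : Fin b → ℝ} (hM : Mᴴ * M = Matrix.diagonal (fun j => (μ j : 𝕜)))
    {j : Fin b} (hj : μ j = 0) (i : Fin a) : M i j = 0 := by
  have h := col_inner_of_conjTranspose_mul_self hM j j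
  rw [if_pos rfl, hj] at h
  have h2 : ∑ i, (‖M i j‖ ^ 2 : ℝ) = 0 := by
    have : ((∑ i, (‖M i j‖ ^ 2 : ℝ) : ℝ) : 𝕜) = 0 := by
      push_cast
      simpa [RCLike.conj_mul] using h
    exact_mod_cast this
  have h3 : (‖M i j‖ ^ 2 : ℝ) = 0 :=
    Finset.sum_eq_zero_iff_of_nonneg (fun i _ => by positivity) |>.mp h2 i (Finset.mem_univ i)
  simpa using pow_eq_zero_iff (n := 2) (by norm_num) |>.mp (by simpa using h3)

/-- The orthonormal family of normalized nonzero columns. -/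
lemma cols_orthonormal {a b : ℕ} {M : Matrix (Fin a) (Fin b) 𝕜}
    {μ : Fin b → ℝ} (hM : Mᴴ * M = Matrix.diagonal (fun j => (μ j : 𝕜)))
    (hμ : ∀ j, 0 ≤ μ j) :
    Orthonormal 𝕜 (fun j : {j : Fin b // μ j ≠ 0} =>
      ((((Real.sqrt (μ j))⁻¹ : ℝ) : 𝕜) •
        (WithLp.equiv 2 (Fin a → 𝕜)).symm (fun i => M i j) : EuclideanSpace 𝕜 (Fin a))) := by
  rw [orthonormal_iff_ite]
  intro j j'
  have key := col_inner_of_conjTranspose_mul_self hM j j'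
  have hinner : (inner 𝕜 ((WithLp.equiv 2 (Fin a → 𝕜)).symm (fun i => M i (j : Fin b)))
      ((WithLp.equiv 2 (Fin a → 𝕜)).symm (fun i => M i (j' : Fin b))) : 𝕜)
      = ∑ i, (starRingEnd 𝕜) (M i j) * M i j' := by
    simp [PiLp.inner_apply, RCLike.inner_apply']
    exact Finset.sum_congr rfl fun _ _ => mul_comm _ _
  rw [inner_smul_left, inner_smul_right, hinner, key]
  rcases eq_or_ne j j' with rfl | hne
  · rw [if_pos rfl, if_pos rfl]
    have hpos : 0 < μ (j : Fin b) := lt_of_le_of_ne (hμ j) (Ne.symm j.2)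
    rw [RCLike.conj_ofReal]
    rw [← RCLike.ofReal_mul, ← RCLike.ofReal_mul]
    rw [show ((Real.sqrt (μ j))⁻¹ * ((Real.sqrt (μ j))⁻¹ * μ j) : ℝ) = 1 by
      rw [← mul_assoc, ← mul_inv]
      rw [← Real.sqrt_mul_self hpos.le]
      field_simp
      rw [Real.sq_sqrt (Real.sqrt_nonneg _)]]
    exact RCLike.ofReal_one
  · rw [if_neg hne, if_neg (by simpa [Subtype.ext_iff] using hne), mul_zero, mul_zero]

/-- Existence of the singular value decomposition over an `RCLike` field,
with rectangular-diagonal middle factor. -/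
lemma svd_exists' {I₁ I₂ : ℕ} (A : Matrix (Fin I₁) (Fin I₂) 𝕜) :
    ∃ (U : Matrix (Fin I₁) (Fin I₁) 𝕜) (V : Matrix (Fin I₂) (Fin I₂) 𝕜)
      (D : Matrix (Fin I₁) (Fin I₂) 𝕜),
      Uᴴ * U = 1 ∧ Vᴴ * V = 1 ∧
      (∀ (i : Fin I₁) (j : Fin I₂), (i : ℕ) ≠ (j : ℕ) → D i j = 0) ∧ A = U * D * Vᴴ := by
  classical
  -- spectral decomposition of AᴴA
  have hPSD : (Aᴴ * A).PosSemidef := posSemidef_conjTranspose_mul_self A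
  have hH : (Aᴴ * A).IsHermitian := hPSD.1
  set V₀ : Matrix (Fin I₂) (Fin I₂) 𝕜 := (hH.eigenvectorUnitary : Matrix (Fin I₂) (Fin I₂) 𝕜)
    with hV₀def
  have hV₀ : V₀ᴴ * V₀ = 1 := by
    simpa [V₀, star_eq_conjTranspose] using hH.eigenvectorUnitary.2.1
  set μ₀ : Fin I₂ → ℝ := hH.eigenvalues with hμ₀def
  have hspec : Aᴴ * A = V₀ * Matrix.diagonal (fun j => (μ₀ j : 𝕜)) * V₀ᴴ := by
    simpa [V₀, μ₀, star_eq_conjTranspose, Function.comp_def] using hH.spectral_theorem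
  have hμ₀ : ∀ j, 0 ≤ μ₀ j := fun j => hPSD.eigenvalues_nonneg j
  -- a permutation moving the nonzero eigenvalues to the front
  set p : Fin I₂ → Prop := fun j => μ₀ j ≠ 0 with hpdef
  set r : ℕ := Fintype.card {j // p j} with hrdef
  have hcards : r + Fintype.card {j // ¬ p j} = I₂ := by
    have := Fintype.card_congr (Equiv.sumCompl p)
    simpa [Fintype.card_sum] using this
  set π : Fin I₂ ≃ Fin I₂ :=
    (finCongr hcards.symm).trans ((finSumFinEquiv.symm).trans
      ((((Fintype.equivFin {j // p j}).symm.sumCongr (Fintype.equivFin {j // ¬ p j}).symm)).trans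
        (Equiv.sumCompl p))) with hπdef
  have hsort : ∀ j : Fin I₂, μ₀ (π j) ≠ 0 → (j : ℕ) < r := by
    intro j hj
    by_contra hge
    rcases h : finSumFinEquiv.symm ((finCongr hcards.symm) j) with a | c
    · have := congrArg (Fin.val ∘ finSumFinEquiv) h
      simp [Function.comp] at this
      omega
    · apply hj
      have hπj : π j = ((Fintype.equivFin {j // ¬ p j}).symm c : Fin I₂) := by
        simp only [hπdef, Equiv.trans_apply, finCongr_apply] at h ⊢
        rw [h]
        simp
      rw [hπj]
      have := ((Fintype.equivFin {j // ¬ p j}).symm c).2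
      simpa [p] using not_not.mp (by simpa [p] using this)
  -- permuted eigenvalues and eigenvector matrix
  set μ : Fin I₂ → ℝ := fun j => μ₀ (π j) with hμdef
  set V : Matrix (Fin I₂) (Fin I₂) 𝕜 := V₀.submatrix id π with hVdef
  have hμ : ∀ j, 0 ≤ μ j := fun j => hμ₀ (π j)
  have hV : Vᴴ * V = 1 := by
    ext j j'
    have h0 := congrFun (congrFun hV₀ (π j)) (π j')
    simp only [Matrix.mul_apply, conjTranspose_apply, Matrix.one_apply, hVdef,
      submatrix_apply, id_eq] at h0 ⊢
    rw [h0]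
    simp [π.injective.eq_iff]
  have hVVt : V * Vᴴ = 1 := mul_eq_one_comm.mp hV
  have hspec' : Aᴴ * A = V * Matrix.diagonal (fun j => (μ j : 𝕜)) * Vᴴ := by
    rw [hspec]
    ext a b
    rw [Matrix.mul_apply, Matrix.mul_apply]
    simp only [Matrix.mul_diagonal, conjTranspose_apply, hVdef, submatrix_apply, id_eq]
    exact (Equiv.sum_comp π (fun j => V₀ a j * ((μ₀ j : 𝕜)) * star (V₀ b j))).symm
  set B : Matrix (Fin I₁) (Fin I₂) 𝕜 := A * V with hBdef
  have hB : Bᴴ * B = Matrix.diagonal (fun j => (μ j : 𝕜)) := by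
    have e1 : Bᴴ * B = Vᴴ * ((Aᴴ * A) * V) := by
      rw [hBdef, conjTranspose_mul, Matrix.mul_assoc, ← Matrix.mul_assoc Aᴴ A V]
    rw [e1, hspec', Matrix.mul_assoc (V * Matrix.diagonal _) Vᴴ V, hV, Matrix.mul_one,
      ← Matrix.mul_assoc, hV, Matrix.one_mul]
  have hsort' : ∀ j : Fin I₂, μ j ≠ 0 → (j : ℕ) < r := fun j h => hsort j h
  -- the number of nonzero eigenvalues is at most I₁
  have hr1 : r ≤ I₁ := by
    have hcard : Fintype.card {j : Fin I₂ // μ j ≠ 0} = r := by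
      rw [hrdef]
      exact Fintype.card_congr (Equiv.subtypeEquiv π (fun j => Iff.rfl))
    have hli := (cols_orthonormal hB hμ).linearIndependent
    have hle := hli.fintype_card_le_finrank
    rw [hcard, finrank_euclideanSpace, Fintype.card_fin] at hle
    exact hle
  -- ℕ-extended columns and eigenvalues
  set ν : ℕ → ℝ := fun m => if h : m < I₂ then μ ⟨m, h⟩ else 0 with hνdef
  set Bc : ℕ → (Fin I₁ → 𝕜) := fun m => if h : m < I₂ then (fun i => B i ⟨m, h⟩) else 0
    with hBcdef
  have hν_eq : ∀ m, ν m = if h : m < I₂ then μ ⟨m, h⟩ else 0 := fun m => rfl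
  have hBc_eq : ∀ m, Bc m = if h : m < I₂ then (fun i => B i ⟨m, h⟩) else 0 := fun m => rfl
  have hν : ∀ m, 0 ≤ ν m := by
    intro m
    rw [hν_eq m]
    split
    · exact hμ _
    · exact le_rfl
  have hcolc : ∀ m m' : ℕ, ∑ i, (starRingEnd 𝕜) (Bc m i) * Bc m' i
      = if m = m' then (ν m : 𝕜) else 0 := by
    intro m m'
    by_cases hm : m < I₂
    · by_cases hm' : m' < I₂
      · have hkey := col_inner_of_conjTranspose_mul_self hB ⟨m, hm⟩ ⟨m', hm'⟩
        rw [hBc_eq m, hBc_eq m', dif_pos hm, dif_pos hm', hν_eq m, dif_pos hm]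
        rw [hkey]
        simp [Fin.mk.injEq]
      · rw [hBc_eq m']
        rw [dif_neg hm']
        simp only [Pi.zero_apply, mul_zero, Finset.sum_const_zero]
        rw [if_neg (by omega)]
    · rw [hBc_eq m, dif_neg hm]
      simp only [Pi.zero_apply, map_zero, zero_mul, Finset.sum_const_zero]
      rcases eq_or_ne m m' with rfl | hne
      · rw [if_pos rfl, hν_eq m, dif_neg hm]
        norm_num
      · rw [if_neg hne]
  have hzero : ∀ (m : ℕ) (hm : m < I₂), ν m = 0 → ∀ i, B i ⟨m, hm⟩ = 0 := by
    intro m hm h0 i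
    refine col_eq_zero_of_diag_zero hB ?_ i
    rw [hν_eq m, dif_pos hm] at h0
    exact h0
  -- the normalized columns, as a partial family on Fin I₁
  set v : Fin I₁ → EuclideanSpace 𝕜 (Fin I₁) := fun i =>
    (((Real.sqrt (ν i))⁻¹ : ℝ) : 𝕜) • (WithLp.equiv 2 (Fin I₁ → 𝕜)).symm (Bc i) with hvdef
  have hv_eq : ∀ i : Fin I₁, v i =
    (((Real.sqrt (ν i))⁻¹ : ℝ) : 𝕜) • (WithLp.equiv 2 (Fin I₁ → 𝕜)).symm (Bc i) := fun i => rfl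
  set s : Set (Fin I₁) := {i | ν (i : ℕ) ≠ 0} with hsdef
  have hons : Orthonormal 𝕜 (s.restrict v) := by
    rw [orthonormal_iff_ite]
    rintro ⟨i, hi⟩ ⟨i', hi'⟩
    have key := hcolc i i'
    have hinner : (inner 𝕜 ((WithLp.equiv 2 (Fin I₁ → 𝕜)).symm (Bc i))
        ((WithLp.equiv 2 (Fin I₁ → 𝕜)).symm (Bc i')) : 𝕜)
        = ∑ a, (starRingEnd 𝕜) (Bc (i : ℕ) a) * Bc (i' : ℕ) a := by
      simp [PiLp.inner_apply, RCLike.inner_apply']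
      exact Finset.sum_congr rfl fun _ _ => mul_comm _ _
    rw [show s.restrict v ⟨i, hi⟩ = v i from rfl, show s.restrict v ⟨i', hi'⟩ = v i' from rfl, hv_eq i, hv_eq i']
    rw [inner_smul_left, inner_smul_right, hinner, key]
    rcases eq_or_ne i i' with rfl | hne
    · have e1 : ((⟨i, hi⟩ : {x // x ∈ s}) = ⟨i, hi'⟩) := rfl
      rw [if_pos e1, if_pos (rfl : (i : ℕ) = (i : ℕ))]
      have hpos : 0 < ν (i : ℕ) := lt_of_le_of_ne (hν _) (Ne.symm hi)
      rw [RCLike.conj_ofReal, ← RCLike.ofReal_mul, ← RCLike.ofReal_mul]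
      rw [show ((Real.sqrt (ν i))⁻¹ * ((Real.sqrt (ν i))⁻¹ * ν i) : ℝ) = 1 by
        rw [← mul_assoc, ← mul_inv, ← Real.sqrt_mul_self hpos.le]
        field_simp
        rw [Real.sq_sqrt (Real.sqrt_nonneg _)]]
      exact RCLike.ofReal_one
    · rw [if_neg (by simpa [Fin.val_inj] using hne), if_neg (by simpa [Subtype.ext_iff] using hne),
        mul_zero, mul_zero]
  obtain ⟨bb, hbb⟩ := hons.exists_orthonormalBasis_extension_of_card_eq
    (by simp [finrank_euclideanSpace])
  set U : Matrix (Fin I₁) (Fin I₁) 𝕜 := Matrix.of (fun i j => bb j i) with hUdef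
  have hU_eq : ∀ i j, U i j = bb j i := fun i j => rfl
  have hU : Uᴴ * U = 1 := by
    ext j j'
    have h2 := orthonormal_iff_ite.mp bb.orthonormal j j'
    simp only [Matrix.mul_apply, conjTranspose_apply, Matrix.one_apply]
    rw [← h2]
    simp only [hU_eq]
    simp [PiLp.inner_apply, RCLike.inner_apply']
    exact Finset.sum_congr rfl fun _ _ => mul_comm _ _
  set D : Matrix (Fin I₁) (Fin I₂) 𝕜 := Matrix.of (fun i j =>
    if (i : ℕ) = (j : ℕ) then ((Real.sqrt (ν (j : ℕ)) : ℝ) : 𝕜) else 0) with hDdef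
  have hD_eq : ∀ i j, D i j =
      if (i : ℕ) = (j : ℕ) then ((Real.sqrt (ν (j : ℕ)) : ℝ) : 𝕜) else 0 := fun i j => rfl
  have hUD : U * D = B := by
    ext a j
    rw [Matrix.mul_apply]
    by_cases hj : (j : ℕ) < I₁
    · have hsum : ∑ i, U a i * D i j = U a ⟨(j : ℕ), hj⟩ * ((Real.sqrt (ν (j:ℕ)) : ℝ) : 𝕜) := by
        rw [Finset.sum_eq_single (⟨(j : ℕ), hj⟩ : Fin I₁)]
        · rw [hD_eq]; simp
        · intro i _ hne
          have hne' : (i : ℕ) ≠ (j : ℕ) := by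
            intro h
            exact hne (by ext; simpa using h)
          rw [hD_eq, if_neg hne', mul_zero]
        · intro h; exact absurd (Finset.mem_univ _) h
      rw [hsum]
      by_cases hν0 : ν (j : ℕ) = 0
      · rw [hν0]
        simp only [Real.sqrt_zero, RCLike.ofReal_zero, mul_zero]
        have hBz : B a j = 0 := by
          have := hzero (j : ℕ) j.2 hν0 a
          rwa [Fin.eta] at this
        rw [hBz]
      · have hmem : (⟨(j : ℕ), hj⟩ : Fin I₁) ∈ s := hν0
        have hbv := hbb _ hmem
        rw [hU_eq, hbv, hv_eq]
        simp only [PiLp.smul_apply, WithLp.equiv_symm_apply, WithLp.ofLp_toLp, smul_eq_mul]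
        have hpos : 0 < ν (j : ℕ) := lt_of_le_of_ne (hν _) (Ne.symm hν0)
        have hsq : Real.sqrt (ν (j:ℕ)) ≠ 0 := by positivity
        rw [mul_comm, ← mul_assoc, ← RCLike.ofReal_mul, mul_inv_cancel₀ hsq]
        rw [RCLike.ofReal_one, one_mul, hBc_eq, dif_pos j.2, Fin.eta]
    · rw [Finset.sum_eq_zero (fun i _ => by
        have hne' : (i : ℕ) ≠ (j : ℕ) := by omega
        rw [hD_eq, if_neg hne', mul_zero])]
      have hμ0 : μ j = 0 := by
        by_contra h
        exact hj (lt_of_lt_of_le (hsort' j h) hr1)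
      exact (col_eq_zero_of_diag_zero hB hμ0 a).symm
  refine ⟨U, V, D, hU, hV, fun i j hij => by rw [hD_eq, if_neg hij], ?_⟩
  rw [hUD, hBdef, Matrix.mul_assoc, hVVt, Matrix.mul_one]


end SVD

section FourierAux

variable [NeZero n]

lemma chi_conj (t : ZMod n) :
    (starRingEnd ℂ) (ZMod.stdAddChar t) = ZMod.stdAddChar (-t) := by
  rw [ZMod.stdAddChar_apply, ZMod.stdAddChar_apply, ← Circle.coe_inv_eq_conj,
    ← AddChar.map_neg_eq_inv]

lemma chi_sum (t : ZMod n) :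
    ∑ k : ZMod n, ZMod.stdAddChar (t * k) = if t = 0 then (n : ℂ) else 0 := by
  split_ifs with h
  · subst h
    simp [AddChar.map_zero_eq_one, ZMod.card]
  · have := AddChar.sum_eq_zero_of_ne_one (ZMod.isPrimitive_stdAddChar n h)
    simpa [AddChar.mulShift_apply] using this

/-- The slice-wise discrete Fourier transform of a real tensor. -/
noncomputable def that {a b : ℕ} (X : ZMod n → Matrix (Fin a) (Fin b) ℝ) :
    ZMod n → Matrix (Fin a) (Fin b) ℂ :=
  fun ω => ∑ k : ZMod n, ZMod.stdAddChar (ω * k) • (X k).map (fun x : ℝ => (x : ℂ))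

lemma that_apply {a b : ℕ} (X : ZMod n → Matrix (Fin a) (Fin b) ℝ) (ω : ZMod n)
    (i : Fin a) (j : Fin b) :
    that X ω i j = ∑ k : ZMod n, ZMod.stdAddChar (ω * k) * (X k i j : ℂ) := by
  simp [that, Matrix.sum_apply, Matrix.map_apply]

lemma that_tMul {a b c : ℕ} (X : ZMod n → Matrix (Fin a) (Fin b) ℝ)
    (Y : ZMod n → Matrix (Fin b) (Fin c) ℝ) (ω : ZMod n) :
    that (tMul X Y) ω = that X ω * that Y ω := by
  have hmap : ∀ k : ZMod n, ((tMul X Y) k).map (fun x : ℝ => (x : ℂ))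
      = ∑ l : ZMod n, (X (k - l)).map (fun x : ℝ => (x : ℂ))
          * (Y l).map (fun x : ℝ => (x : ℂ)) := by
    intro k
    ext i j
    simp only [tMul, Matrix.map_apply, Matrix.sum_apply, Matrix.mul_apply]
    push_cast
    rfl
  calc that (tMul X Y) ω
      = ∑ k : ZMod n, ∑ l : ZMod n, ZMod.stdAddChar (ω * k) •
          ((X (k - l)).map (fun x : ℝ => (x : ℂ)) * (Y l).map (fun x : ℝ => (x : ℂ))) := by
        simp only [that]
        refine Finset.sum_congr rfl fun k _ => ?_
        rw [hmap, Finset.smul_sum]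
    _ = ∑ l : ZMod n, ∑ k : ZMod n, ZMod.stdAddChar (ω * k) •
          ((X (k - l)).map (fun x : ℝ => (x : ℂ)) * (Y l).map (fun x : ℝ => (x : ℂ))) :=
        Finset.sum_comm
    _ = ∑ l : ZMod n, ∑ m : ZMod n,
          (ZMod.stdAddChar (ω * m) * ZMod.stdAddChar (ω * l)) •
          ((X m).map (fun x : ℝ => (x : ℂ)) * (Y l).map (fun x : ℝ => (x : ℂ))) := by
        refine Finset.sum_congr rfl fun l _ => ?_
        refine (Fintype.sum_equiv (Equiv.addRight l) _ _ fun m => ?_).symm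
        rw [Equiv.coe_addRight]
        rw [add_sub_cancel_right, mul_add, AddChar.map_add_eq_mul]
    _ = that X ω * that Y ω := by
        simp only [that, Matrix.sum_mul, Matrix.mul_sum, Matrix.smul_mul, Matrix.mul_smul,
          Finset.smul_sum, smul_smul]
        refine Finset.sum_congr rfl fun l _ => Finset.sum_congr rfl fun m _ => ?_
        rw [mul_comm (ZMod.stdAddChar (ω * m)) (ZMod.stdAddChar (ω * l))]

lemma that_tTranspose {a b : ℕ} (X : ZMod n → Matrix (Fin a) (Fin b) ℝ) (ω : ZMod n) :
    that (tTranspose X) ω = (that X ω)ᴴ := by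
  ext i j
  rw [Matrix.conjTranspose_apply, that_apply, that_apply, RCLike.star_def, map_sum]
  refine Fintype.sum_equiv (Equiv.neg (ZMod n)) _ _ fun k => ?_
  rw [Equiv.neg_apply, map_mul (starRingEnd ℂ), chi_conj, Complex.conj_ofReal, mul_neg, neg_neg]
  rfl

lemma that_tId (m : ℕ) (ω : ZMod n) : that (tId n m) ω = 1 := by
  rw [that, Finset.sum_eq_single 0]
  · simp [tId, Matrix.map_one]
  · intro k _ hk
    simp [tId, hk]
  · intro h
    exact absurd (Finset.mem_univ _) h

lemma that_conj {a b : ℕ} (X : ZMod n → Matrix (Fin a) (Fin b) ℝ) (ω : ZMod n) :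
    that X (-ω) = (that X ω).map (starRingEnd ℂ) := by
  ext i j
  rw [Matrix.map_apply, that_apply, that_apply, map_sum]
  refine Finset.sum_congr rfl fun k _ => ?_
  rw [map_mul (starRingEnd ℂ), chi_conj, Complex.conj_ofReal, neg_mul]

lemma that_injective {a b : ℕ} (X Y : ZMod n → Matrix (Fin a) (Fin b) ℝ)
    (h : ∀ ω, that X ω = that Y ω) : X = Y := by
  have key : ∀ (Z : ZMod n → Matrix (Fin a) (Fin b) ℝ) (k : ZMod n) (i : Fin a) (j : Fin b),
      ∑ ω : ZMod n, ZMod.stdAddChar (ω * (-k)) * that Z ω i j = (n : ℂ) * (Z k i j : ℂ) := by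
    intro Z k i j
    calc ∑ ω : ZMod n, ZMod.stdAddChar (ω * (-k)) * that Z ω i j
        = ∑ ω : ZMod n, ∑ m : ZMod n, ZMod.stdAddChar ((m - k) * ω) * (Z m i j : ℂ) := by
          refine Finset.sum_congr rfl fun ω _ => ?_
          rw [that_apply, Finset.mul_sum]
          refine Finset.sum_congr rfl fun m _ => ?_
          rw [← mul_assoc, ← AddChar.map_add_eq_mul]
          congr 2
          ring
      _ = ∑ m : ZMod n, (∑ ω : ZMod n, ZMod.stdAddChar ((m - k) * ω)) * (Z m i j : ℂ) := by
          rw [Finset.sum_comm]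
          refine Finset.sum_congr rfl fun m _ => ?_
          rw [Finset.sum_mul]
      _ = (n : ℂ) * (Z k i j : ℂ) := by
          rw [Finset.sum_eq_single k]
          · rw [chi_sum, if_pos (by simp)]
          · intro m _ hm
            rw [chi_sum, if_neg (by simpa [sub_eq_zero] using hm), zero_mul]
          · intro hk
            exact absurd (Finset.mem_univ _) hk
  funext k
  ext i j
  have h1 := key X k i j
  have h2 := key Y k i j
  have h12 : ∑ ω : ZMod n, ZMod.stdAddChar (ω * (-k)) * that X ω i j
      = ∑ ω : ZMod n, ZMod.stdAddChar (ω * (-k)) * that Y ω i j :=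
    Finset.sum_congr rfl fun ω _ => by rw [h ω]
  have hn : (n : ℂ) ≠ 0 := Nat.cast_ne_zero.mpr (NeZero.ne n)
  have hfin := mul_left_cancel₀ hn (by rw [← h1, h12, h2] : (n:ℂ) * (X k i j : ℂ) = (n:ℂ) * (Y k i j : ℂ))
  exact_mod_cast hfin


end FourierAux

/-- Entrywise complex conjugation of a matrix. -/
noncomputable def cmap {a b : ℕ} (M : Matrix (Fin a) (Fin b) ℂ) : Matrix (Fin a) (Fin b) ℂ :=
  M.map (starRingEnd ℂ)

lemma cmap_apply {a b : ℕ} (M : Matrix (Fin a) (Fin b) ℂ) (i : Fin a) (j : Fin b) :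
    cmap M i j = (starRingEnd ℂ) (M i j) := rfl

lemma cmap_mul {a b c : ℕ} (M : Matrix (Fin a) (Fin b) ℂ) (N : Matrix (Fin b) (Fin c) ℂ) :
    cmap (M * N) = cmap M * cmap N := by
  ext i j
  simp [cmap, Matrix.mul_apply, map_sum]

lemma cmap_conjTranspose {a b : ℕ} (M : Matrix (Fin a) (Fin b) ℂ) :
    cmap Mᴴ = (cmap M)ᴴ := by
  ext i j
  simp [cmap, Matrix.conjTranspose_apply]

lemma cmap_one {a : ℕ} : cmap (1 : Matrix (Fin a) (Fin a) ℂ) = 1 := by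
  ext i j
  simp [cmap, Matrix.one_apply, apply_ite (starRingEnd ℂ)]

lemma cmap_cmap {a b : ℕ} (M : Matrix (Fin a) (Fin b) ℂ) : cmap (cmap M) = M := by
  ext i j
  simp [cmap]

/-- Entrywise real-to-complex lift of a matrix. -/
noncomputable def rmap {a b : ℕ} (M : Matrix (Fin a) (Fin b) ℝ) : Matrix (Fin a) (Fin b) ℂ :=
  M.map (fun x : ℝ => (x : ℂ))

lemma rmap_mul {a b c : ℕ} (M : Matrix (Fin a) (Fin b) ℝ) (N : Matrix (Fin b) (Fin c) ℝ) :
    rmap (M * N) = rmap M * rmap N := by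
  ext i j
  simp only [rmap, Matrix.map_apply, Matrix.mul_apply]
  push_cast
  rfl

lemma rmap_conjTranspose {a b : ℕ} (M : Matrix (Fin a) (Fin b) ℝ) :
    rmap Mᴴ = (rmap M)ᴴ := by
  ext i j
  simp [rmap, Matrix.conjTranspose_apply]

lemma rmap_one {a : ℕ} : rmap (1 : Matrix (Fin a) (Fin a) ℝ) = 1 := by
  ext i j
  simp [rmap, Matrix.one_apply, apply_ite (fun x : ℝ => (x : ℂ))]

lemma cmap_rmap {a b : ℕ} (M : Matrix (Fin a) (Fin b) ℝ) : cmap (rmap M) = rmap M := by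
  ext i j
  simp [cmap, rmap, Complex.conj_ofReal]

section Fourier2

variable {n : ℕ} [NeZero n]

/-- Fourier inversion: a conjugation-symmetric family of complex matrices is the
transform of the real tensor obtained by the inverse transform. -/
lemma that_invRe {a b : ℕ} (G : ZMod n → Matrix (Fin a) (Fin b) ℂ)
    (hG : ∀ ω, G (-ω) = cmap (G ω)) :
    that (fun k => Matrix.of fun i j =>
      ((n : ℂ)⁻¹ * ∑ ω : ZMod n, ZMod.stdAddChar (ω * (-k)) * G ω i j).re) = G := by
  have hreal : ∀ (k : ZMod n) (i : Fin a) (j : Fin b),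
      ((((n : ℂ)⁻¹ * ∑ ω : ZMod n, ZMod.stdAddChar (ω * (-k)) * G ω i j).re : ℝ) : ℂ)
        = (n : ℂ)⁻¹ * ∑ ω : ZMod n, ZMod.stdAddChar (ω * (-k)) * G ω i j := by
    intro k i j
    rw [← Complex.conj_eq_iff_re]
    rw [map_mul (starRingEnd ℂ), map_inv₀, Complex.conj_natCast, map_sum]
    congr 1
    refine Fintype.sum_equiv (Equiv.neg (ZMod n)) _ _ fun ω => ?_
    rw [Equiv.neg_apply, map_mul (starRingEnd ℂ), chi_conj]
    have h1 : (starRingEnd ℂ) (G ω i j) = G (-ω) i j := by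
      rw [hG ω, cmap_apply]
    rw [h1]
    congr 2
    ring
  funext ω
  ext i j
  rw [that_apply]
  calc ∑ k : ZMod n, ZMod.stdAddChar (ω * k) *
        ((((n : ℂ)⁻¹ * ∑ ω' : ZMod n, ZMod.stdAddChar (ω' * (-k)) * G ω' i j).re : ℝ) : ℂ)
      = ∑ k : ZMod n, (n : ℂ)⁻¹ * ∑ ω' : ZMod n,
          ZMod.stdAddChar ((ω - ω') * k) * G ω' i j := by
        refine Finset.sum_congr rfl fun k _ => ?_
        rw [hreal k i j, ← mul_assoc, mul_comm (ZMod.stdAddChar (ω * k)) ((n:ℂ)⁻¹), mul_assoc,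
          Finset.mul_sum]
        congr 1
        refine Finset.sum_congr rfl fun ω' _ => ?_
        rw [← mul_assoc, ← AddChar.map_add_eq_mul]
        congr 2
        ring
    _ = (n : ℂ)⁻¹ * ∑ ω' : ZMod n,
          (∑ k : ZMod n, ZMod.stdAddChar ((ω - ω') * k)) * G ω' i j := by
        rw [← Finset.mul_sum]
        congr 1
        rw [Finset.sum_comm]
        refine Finset.sum_congr rfl fun ω' _ => ?_
        rw [Finset.sum_mul]
    _ = G ω i j := by
        rw [Finset.sum_eq_single ω]
        · rw [chi_sum, if_pos (by simp), ← mul_assoc, inv_mul_cancel₀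
            (Nat.cast_ne_zero.mpr (NeZero.ne n)), one_mul]
        · intro ω' _ hω'
          rw [chi_sum, if_neg (by simpa [sub_eq_zero] using (Ne.symm hω')), zero_mul]
        · intro hω
          exact absurd (Finset.mem_univ _) hω

end Fourier2


/-- Existence of the tensor SVD (t-SVD): every third-order tensor factors as
`U ∗ S ∗ Vᵀ` with `U`, `V` orthogonal and `S` f-diagonal. -/
theorem tsvd_exists (n I₁ I₂ : ℕ) [NeZero n]
    (X : ZMod n → Matrix (Fin I₁) (Fin I₂) ℝ) :
    ∃ (U : ZMod n → Matrix (Fin I₁) (Fin I₁) ℝ)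
      (V : ZMod n → Matrix (Fin I₂) (Fin I₂) ℝ)
      (S : ZMod n → Matrix (Fin I₁) (Fin I₂) ℝ),
      tOrthogonal U ∧ tOrthogonal V ∧
      (∀ (k : ZMod n) (i : Fin I₁) (j : Fin I₂), (i : ℕ) ≠ (j : ℕ) → S k i j = 0) ∧
      X = tMul (tMul U S) (tTranspose V) := by
  classical
  set A : ZMod n → Matrix (Fin I₁) (Fin I₂) ℂ := that X with hAdef
  have hAconj : ∀ ω, A (-ω) = cmap (A ω) := fun ω => that_conj X ω
  -- the predicate "t is an SVD of A ω"
  set P : ZMod n → (Matrix (Fin I₁) (Fin I₁) ℂ × Matrix (Fin I₂) (Fin I₂) ℂ ×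
      Matrix (Fin I₁) (Fin I₂) ℂ) → Prop := fun ω t =>
    t.1ᴴ * t.1 = 1 ∧ t.2.1ᴴ * t.2.1 = 1 ∧
      (∀ (i : Fin I₁) (j : Fin I₂), (i : ℕ) ≠ (j : ℕ) → t.2.2 i j = 0) ∧
      A ω = t.1 * t.2.2 * t.2.1ᴴ with hPdef
  -- conjugating an SVD of A (-ω) gives an SVD of A ω
  have hPconj : ∀ ω t, P (-ω) t → P ω (cmap t.1, cmap t.2.1, cmap t.2.2) := by
    rintro ω ⟨U, V, D⟩ ⟨hU, hV, hD, hA⟩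
    refine ⟨?_, ?_, ?_, ?_⟩
    · rw [← cmap_conjTranspose, ← cmap_mul, hU, cmap_one]
    · rw [← cmap_conjTranspose, ← cmap_mul, hV, cmap_one]
    · intro i j hij
      simpa [cmap] using congrArg (starRingEnd ℂ) (hD i j hij)
    · have h2 := hAconj (-ω)
      rw [neg_neg] at h2
      rw [h2, hA, cmap_mul, cmap_mul, cmap_conjTranspose]
  -- base choice: for each ω an SVD of A ω, real whenever ω = -ω
  have base : ∀ ω : ZMod n, ∃ t, P ω t ∧
      (ω = -ω → (cmap t.1, cmap t.2.1, cmap t.2.2) = t) := by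
    intro ω
    by_cases hω : ω = -ω
    · -- A ω has real entries
      have hAreal : A ω = rmap (Matrix.of fun i j => (A ω i j).re) := by
        ext i j
        rw [rmap]
        simp only [Matrix.map_apply, Matrix.of_apply]
        rw [Complex.conj_eq_iff_re.mp ?_]
        have h2 : cmap (A ω) = A ω := by rw [← hAconj ω, ← hω]
        exact congrFun (congrFun h2 i) j
      obtain ⟨U, V, D, hU, hV, hD, hA⟩ :=
        svd_exists' (𝕜 := ℝ) (Matrix.of fun i j => (A ω i j).re)
      refine ⟨(rmap U, rmap V, rmap D), ⟨?_, ?_, ?_, ?_⟩, fun _ => ?_⟩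
      · rw [← rmap_conjTranspose, ← rmap_mul, hU, rmap_one]
      · rw [← rmap_conjTranspose, ← rmap_mul, hV, rmap_one]
      · intro i j hij
        simp only [rmap, Matrix.map_apply, hD i j hij, Complex.ofReal_zero]
      · rw [hAreal, hA, rmap_mul, rmap_mul, rmap_conjTranspose]
      · simp only [cmap_rmap]
    · obtain ⟨U, V, D, hU, hV, hD, hA⟩ := svd_exists' (𝕜 := ℂ) (A ω)
      exact ⟨(U, V, D), ⟨hU, hV, hD, hA⟩, fun h => absurd h hω⟩
  choose f hf using base
  -- symmetrized choice
  set F : ZMod n → (Matrix (Fin I₁) (Fin I₁) ℂ × Matrix (Fin I₂) (Fin I₂) ℂ ×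
      Matrix (Fin I₁) (Fin I₂) ℂ) := fun ω =>
    if (ω.val ≤ (-ω).val) then f ω else
      (cmap (f (-ω)).1, cmap (f (-ω)).2.1, cmap (f (-ω)).2.2) with hFdef
  have hF_eq : ∀ ω : ZMod n, F ω = if (ω.val ≤ (-ω).val) then f ω else
      (cmap (f (-ω)).1, cmap (f (-ω)).2.1, cmap (f (-ω)).2.2) := fun ω => rfl
  have hself : ∀ ω : ZMod n, ω.val = (-ω).val → ω = -ω := fun ω h =>
    ZMod.val_injective n h
  have hFP : ∀ ω, P ω (F ω) := by
    intro ω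
    rw [hF_eq ω]
    by_cases h : ω.val ≤ (-ω).val
    · rw [if_pos h]
      exact (hf ω).1
    · rw [if_neg h]
      exact hPconj ω (f (-ω)) (hf (-ω)).1
  have hFsym : ∀ ω, F (-ω) = (cmap (F ω).1, cmap (F ω).2.1, cmap (F ω).2.2) := by
    intro ω
    rcases lt_trichotomy ω.val (-ω).val with hlt | heq | hgt
    · rw [hF_eq (-ω), hF_eq ω, if_neg (by rw [neg_neg]; omega), if_pos (le_of_lt hlt), neg_neg]
    · have hωe : ω = -ω := hself ω heq
      rw [hF_eq (-ω), hF_eq ω, if_pos (le_of_eq heq), ← hωe,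
        if_pos (le_of_eq (by rw [← hωe]))]
      exact ((hf ω).2 hωe).symm
    · rw [hF_eq (-ω), hF_eq ω, if_pos (by rw [neg_neg]; omega), if_neg (not_le.mpr hgt),
        cmap_cmap, cmap_cmap, cmap_cmap]
  have hU1 : ∀ ω, (F ω).1ᴴ * (F ω).1 = 1 := fun ω => (hFP ω).1
  have hV1 : ∀ ω, (F ω).2.1ᴴ * (F ω).2.1 = 1 := fun ω => (hFP ω).2.1
  have hDdiag : ∀ ω (i : Fin I₁) (j : Fin I₂), (i : ℕ) ≠ (j : ℕ) → (F ω).2.2 i j = 0 :=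
    fun ω => (hFP ω).2.2.1
  have hAfac : ∀ ω, A ω = (F ω).1 * (F ω).2.2 * (F ω).2.1ᴴ := fun ω => (hFP ω).2.2.2
  have hsymU : ∀ ω, (F (-ω)).1 = cmap ((fun ω => (F ω).1) ω) := fun ω =>
    congrArg Prod.fst (hFsym ω)
  have hsymV : ∀ ω, (F (-ω)).2.1 = cmap ((fun ω => (F ω).2.1) ω) := fun ω =>
    congrArg (fun t => t.2.1) (hFsym ω)
  have hsymS : ∀ ω, (F (-ω)).2.2 = cmap ((fun ω => (F ω).2.2) ω) := fun ω =>
    congrArg (fun t => t.2.2) (hFsym ω)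
  set U : ZMod n → Matrix (Fin I₁) (Fin I₁) ℝ := fun k => Matrix.of fun i j =>
    ((n : ℂ)⁻¹ * ∑ ω : ZMod n, ZMod.stdAddChar (ω * (-k)) * (F ω).1 i j).re with hUdef
  set V : ZMod n → Matrix (Fin I₂) (Fin I₂) ℝ := fun k => Matrix.of fun i j =>
    ((n : ℂ)⁻¹ * ∑ ω : ZMod n, ZMod.stdAddChar (ω * (-k)) * (F ω).2.1 i j).re with hVdef
  set S : ZMod n → Matrix (Fin I₁) (Fin I₂) ℝ := fun k => Matrix.of fun i j =>
    ((n : ℂ)⁻¹ * ∑ ω : ZMod n, ZMod.stdAddChar (ω * (-k)) * (F ω).2.2 i j).re with hSdef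
  have hthatU : that U = fun ω => (F ω).1 := that_invRe (fun ω => (F ω).1) hsymU
  have hthatV : that V = fun ω => (F ω).2.1 := that_invRe (fun ω => (F ω).2.1) hsymV
  have hthatS : that S = fun ω => (F ω).2.2 := that_invRe (fun ω => (F ω).2.2) hsymS
  have hSdiag : ∀ (k : ZMod n) (i : Fin I₁) (j : Fin I₂), (i : ℕ) ≠ (j : ℕ) → S k i j = 0 := by
    intro k i j hij
    have hz : (∑ ω : ZMod n, ZMod.stdAddChar (ω * (-k)) * (F ω).2.2 i j) = 0 :=
      Finset.sum_eq_zero fun ω _ => by rw [hDdiag ω i j hij, mul_zero]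
    rw [show S k i j
        = ((n : ℂ)⁻¹ * ∑ ω : ZMod n, ZMod.stdAddChar (ω * (-k)) * (F ω).2.2 i j).re from rfl,
      hz, mul_zero, Complex.zero_re]
  have horthU : tOrthogonal U := by
    constructor
    · apply that_injective
      intro ω
      rw [that_tMul, that_tTranspose, that_tId]
      rw [show that U ω = (F ω).1 from congrFun hthatU ω]
      exact hU1 ω
    · apply that_injective
      intro ω
      rw [that_tMul, that_tTranspose, that_tId]
      rw [show that U ω = (F ω).1 from congrFun hthatU ω]
      exact mul_eq_one_comm.mp (hU1 ω)
  have horthV : tOrthogonal V := by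
    constructor
    · apply that_injective
      intro ω
      rw [that_tMul, that_tTranspose, that_tId]
      rw [show that V ω = (F ω).2.1 from congrFun hthatV ω]
      exact hV1 ω
    · apply that_injective
      intro ω
      rw [that_tMul, that_tTranspose, that_tId]
      rw [show that V ω = (F ω).2.1 from congrFun hthatV ω]
      exact mul_eq_one_comm.mp (hV1 ω)
  refine ⟨U, V, S, horthU, horthV, hSdiag, ?_⟩
  apply that_injective
  intro ω
  rw [that_tMul, that_tMul, that_tTranspose]
  rw [show that U ω = (F ω).1 from congrFun hthatU ω,
    show that S ω = (F ω).2.2 from congrFun hthatS ω,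
    show that V ω = (F ω).2.1 from congrFun hthatV ω]
  exact hAfac ω
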